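/- Let A be a countable alphabet, P a probability distribution on A, S a proper dictionary over A, and α ∈ S. Then the average length of the extended dictionary satisfies l̄(S[α]) = l̄(S) + P(α), where l̄(S) = ∑_{β∈S} P(β)|β| and the sums are taken in [0,∞]. -/

import Mathlib

open scoped ENNReal
open Filter

/-- The probability of a finite string, obtained by extending the
distribution `P` multiplicatively: `P(a₁⋯aₙ) = ∏ᵢ P(aᵢ)`. -/
noncomputable def strProb {A : Type*} (P : PMF A) (l : List A) : ℝ≥0∞ :=
  (l.map fun a => P a).prod

/-- A dictionary is a set of nonempty finite strings. -/
def IsDictionary {A : Type*} (D : Set (List A)) : Prop :=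
  ∀ α ∈ D, α ≠ []

/-- A dictionary is proper if no string in it is a (proper) prefix of
another string in it. -/
def IsProper {A : Type*} (D : Set (List A)) : Prop :=
  ∀ α ∈ D, ∀ β ∈ D, α <+: β → α = β

/-- A dictionary is complete if every infinite sequence over `A` has a
prefix in it. -/
def IsCompleteDict {A : Type*} (D : Set (List A)) : Prop :=
  ∀ x : ℕ → A, ∃ α ∈ D, α = (List.range α.length).map x

/-- The probability that the length-`n` prefix of a random infinite sequence
has some prefix belonging to `D`. -/
noncomputable def prefixProb {A : Type*} (P : PMF A) (D : Set (List A)) (n : ℕ) : ℝ≥0∞ :=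
  ∑' γ : {γ : List A // γ.length = n ∧ ∃ β ∈ D, β <+: γ}, strProb P γ

/-- `D` is almost surely complete: under the infinite product measure `P^ℕ`,
the event that an infinite sequence has a prefix in `D` has probability `1`.
(By continuity from below, this probability is the limit, as `n → ∞`, of the
probability that the length-`n` prefix has a prefix in `D`.) -/
def IsASC {A : Type*} (P : PMF A) (D : Set (List A)) : Prop :=
  Tendsto (prefixProb P D) atTop (nhds 1)

/-- `Tset D n` = strings of length `n` having no prefix in `D`. -/
def Tset {A : Type*} (D : Set (List A)) (n : ℕ) : Set (List A) :=
  {α | α.length = n ∧ ∀ β ∈ D, ¬ β <+: α}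

/-- `Dperp D n = {α ∈ D : |α| = n} ∪ Tₙ`. -/
def Dperp {A : Type*} (D : Set (List A)) (n : ℕ) : Set (List A) :=
  {α ∈ D | α.length = n} ∪ Tset D n

/-- `Dn D n = {α ∈ D : |α| < n} ∪ Dₙ^⊥`. -/
def Dn {A : Type*} (D : Set (List A)) (n : ℕ) : Set (List A) :=
  {α ∈ D | α.length < n} ∪ Dperp D n

/-- The one-letter extensions `αA = {αa : a ∈ A}` of a string `α`. -/
def oneExt {A : Type*} (α : List A) : Set (List A) :=
  {l | ∃ a : A, l = α ++ [a]}

/-- The extension `D[α] = (D \ {α}) ∪ αA` of a dictionary at `α`. -/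
def extendDict {A : Type*} (D : Set (List A)) (α : List A) : Set (List A) :=
  (D \ {α}) ∪ oneExt α

/-- The nonnegative entropy contribution `-p log₂ p ∈ [0,∞]` of a
probability value `p`. -/
noncomputable def entTerm (p : ℝ≥0∞) : ℝ≥0∞ :=
  ENNReal.ofReal (-(p.toReal * Real.logb 2 p.toReal))

/-- The entropy `H(E) = -∑_{α∈E} P(α) log₂ P(α)` of a dictionary, in `[0,∞]`. -/
noncomputable def dictEntropy {A : Type*} (P : PMF A) (E : Set (List A)) : ℝ≥0∞ :=
  ∑' α : E, entTerm (strProb P α)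

/-- The average length `l̄(E) = ∑_{α∈E} P(α)|α|` of a dictionary, in `[0,∞]`. -/
noncomputable def avgLen {A : Type*} (P : PMF A) (E : Set (List A)) : ℝ≥0∞ :=
  ∑' α : E, strProb P α * (α : List A).length

/-- The source entropy `H(P) = -∑_{a∈A} P(a) log₂ P(a)`, in `[0,∞]`. -/
noncomputable def srcEntropy {A : Type*} (P : PMF A) : ℝ≥0∞ :=
  ∑' a : A, entTerm (P a)

/-- For a proper dictionary `S` and `α ∈ S`,
`l̄(S[α]) = l̄(S) + P(α)`. -/
theorem avgLen_extendDict {A : Type*} [Countable A] (P : PMF A)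
    (S : Set (List A)) (hdict : IsDictionary S) (hprop : IsProper S)
    (α : List A) (hα : α ∈ S) :
    avgLen P (extendDict S α) = avgLen P S + strProb P α := by
  classical
  have aux : ∀ (f : List A → ℝ≥0∞) {s t : Set (List A)}, Disjoint s t →
      (∑' x : (s ∪ t : Set (List A)), f x) = (∑' x : s, f x) + ∑' x : t, f x :=
    fun f _ _ h => Summable.tsum_union_disjoint h ENNReal.summable ENNReal.summable
  set f : List A → ℝ≥0∞ := fun β => strProb P β * β.length with hf
  have hrange : oneExt α = Set.range (fun a : A => α ++ [a]) := by
    ext l; simp [oneExt, Set.range, eq_comm]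
  have hinj : Function.Injective (fun a : A => α ++ [a]) := by
    intro a b h
    simpa using List.append_cancel_left h
  have hdisj : Disjoint (S \ {α}) (oneExt α) := by
    rw [Set.disjoint_left]
    rintro β ⟨hβS, hβne⟩ ⟨a, rfl⟩
    exact hβne (by simp [(hprop α hα _ hβS ⟨[a], rfl⟩).symm])
  have hsum_ext : (∑' β : (oneExt α), f β) = strProb P α * α.length + strProb P α := by
    rw [hrange, tsum_range f hinj]
    have : ∀ a : A, f (α ++ [a]) = P a * (strProb P α * α.length + strProb P α) := by
      intro a
      simp only [hf, strProb, List.map_append, List.prod_append, List.length_append,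
        List.map_cons, List.map_nil, List.prod_cons, List.prod_nil, List.length_cons,
        List.length_nil]
      push_cast
      ring
    simp_rw [this]
    rw [ENNReal.tsum_mul_right, P.tsum_coe, one_mul]
  have hSeq : (S \ {α}) ∪ {α} = S := by
    rw [Set.diff_union_self, Set.union_eq_self_of_subset_right (by simpa using hα)]
  have hS : avgLen P S = (∑' β : (S \ {α} : Set (List A)), f β) + f α := by
    have h2 := aux f (Set.disjoint_sdiff_left (t := S) (s := {α}))
    rw [hSeq, tsum_singleton α f] at h2
    exact h2
  have hmain : avgLen P (extendDict S α) =
      (∑' β : (S \ {α} : Set (List A)), f β) + (strProb P α * α.length + strProb P α) := by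
    rw [← hsum_ext, ← aux f hdisj]; rfl
  rw [hmain, hS]
  show _ = (_ + strProb P α * ↑α.length) + strProb P α
  ring
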